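/- Let p ≥ 1 be an integer. Let M ∈ GL(d,R) have ∂-support in {0,1,…,p}, and let G ∈ GL(d,R) have finite ∂-support. If the matrix M̂ = S(G)·M·G⁻¹ has ∂-support in {0,1,…,p−1}, then G itself has ∂-support in {0,1,…,p−1}, i.e. ∂_{j,ℓ}(G) = 0 for every j ∈ {1,…,N} and every ℓ ∉ {0,1,…,p−1}. -/

import Mathlib

/-- Fix positive integers `d`, `N`.  `R` is a commutative ring, `S` a ring automorphism,
`P j ℓ` derivations with the intertwining law `S ∘ P j ℓ = P j (ℓ+1) ∘ S`, all acting
entrywise on matrices.  `Q` has ∂-support in `A` if `P j ℓ Q = 0` for `ℓ ∉ A`; finite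
∂-support means such a finite `A` exists.  Claim: let `p ≥ 1`, let `M` be invertible
with ∂-support in `{0,…,p}`, and `G` invertible with finite ∂-support.  If
`M̂ = S(G)·M·G⁻¹` has ∂-support in `{0,…,p−1}`, then `G` has ∂-support in `{0,…,p−1}`. -/
theorem stmt_3 {d N : ℕ} (hd : 0 < d) (hN : 0 < N) {R : Type*} [CommRing R]
    (S : R ≃+* R)
    (P : Fin N → ℤ → R → R)
    (hPadd : ∀ j ℓ x y, P j ℓ (x + y) = P j ℓ x + P j ℓ y)
    (hPmul : ∀ j ℓ x y, P j ℓ (x * y) = x * P j ℓ y + P j ℓ x * y)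
    (hPS : ∀ j ℓ x, S (P j ℓ x) = P j (ℓ + 1) (S x))
    (p : ℤ) (hp : 1 ≤ p)
    (M G : Matrix (Fin d) (Fin d) R)
    (hM : IsUnit M.det) (hG : IsUnit G.det)
    (hMsupp : ∀ (j : Fin N) (ℓ : ℤ), ℓ ∉ Set.Icc 0 p → M.map (P j ℓ) = 0)
    (hGfin : ∃ A : Finset ℤ, ∀ (j : Fin N) (ℓ : ℤ), ℓ ∉ A → G.map (P j ℓ) = 0)
    (hhat : ∀ (j : Fin N) (ℓ : ℤ), ℓ ∉ Set.Icc 0 (p - 1) →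
      ((G.map ⇑S) * M * G⁻¹).map (P j ℓ) = 0) :
    ∀ (j : Fin N) (ℓ : ℤ), ℓ ∉ Set.Icc 0 (p - 1) → G.map (P j ℓ) = 0 := by
  obtain ⟨A, hA⟩ := hGfin
  set Mhat : Matrix (Fin d) (Fin d) R := (G.map ⇑S) * M * G⁻¹ with hMhatdef
  -- product rule for entrywise derivations on matrices
  have hmul : ∀ (j : Fin N) (ℓ : ℤ) (X Y : Matrix (Fin d) (Fin d) R),
      (X * Y).map (P j ℓ) = X * Y.map (P j ℓ) + X.map (P j ℓ) * Y := by
    intro j ℓ X Y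
    ext i k
    have hsum : P j ℓ (∑ x, X i x * Y x k) = ∑ x, P j ℓ (X i x * Y x k) :=
      map_sum (AddMonoidHom.mk' (P j ℓ) (hPadd j ℓ)) _ _
    simp only [Matrix.map_apply, Matrix.mul_apply, Matrix.add_apply]
    rw [hsum, ← Finset.sum_add_distrib]
    exact Finset.sum_congr rfl fun x _ => hPmul j ℓ _ _
  -- derivation of S-map
  have hSmap : ∀ (j : Fin N) (ℓ : ℤ),
      (G.map ⇑S).map (P j ℓ) = (G.map (P j (ℓ - 1))).map ⇑S := by
    intro j ℓ
    ext i k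
    simp only [Matrix.map_apply]
    have := hPS j (ℓ - 1) (G i k)
    rw [sub_add_cancel] at this
    exact this.symm
  -- key equation
  have key : Mhat * G = (G.map ⇑S) * M := by
    rw [hMhatdef, mul_assoc, Matrix.nonsing_inv_mul G hG, mul_one]
  -- invertibility of Mhat
  have hMhat : IsUnit Mhat.det := by
    rw [hMhatdef, Matrix.det_mul, Matrix.det_mul]
    have h1 : IsUnit (G.map ⇑S).det := by
      have hdet : (G.map ⇑S).det = S G.det := ((S : R →+* R).map_det G).symm
      rw [hdet]
      exact hG.map (S : R →+* R)
    have h2 : IsUnit (G⁻¹).det := by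
      rw [Matrix.det_nonsing_inv]
      exact isUnit_ringInverse.mpr hG
    exact (h1.mul hM).mul h2
  -- cancellation lemmas
  have hcl : ∀ X : Matrix (Fin d) (Fin d) R, Mhat * X = 0 → X = 0 := by
    intro X h
    calc X = Mhat⁻¹ * (Mhat * X) := by
            rw [← mul_assoc, Matrix.nonsing_inv_mul _ hMhat, one_mul]
      _ = 0 := by rw [h, mul_zero]
  have hcr : ∀ X : Matrix (Fin d) (Fin d) R, X * M = 0 → X = 0 := by
    intro X h
    calc X = X * M * M⁻¹ := by
            rw [mul_assoc, Matrix.mul_nonsing_inv _ hM, mul_one]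
      _ = 0 := by rw [h, zero_mul]
  have hS0 : ∀ Q : Matrix (Fin d) (Fin d) R, Q.map ⇑S = 0 → Q = 0 := by
    intro Q h
    ext i k
    have h' : S (Q i k) = 0 := by
      have := congrFun (congrFun h i) k
      simpa [Matrix.map_apply] using this
    have := S.injective (h'.trans (map_zero S).symm)
    simpa using this
  -- main relation
  have hrel : ∀ (j : Fin N) (ℓ : ℤ), ℓ ∉ Set.Icc 0 (p - 1) → ℓ ∉ Set.Icc 0 p →
      Mhat * G.map (P j ℓ) = (G.map (P j (ℓ - 1))).map ⇑S * M := by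
    intro j ℓ h1 h2
    have e1 := congrArg (fun X : Matrix (Fin d) (Fin d) R => X.map (P j ℓ)) key
    rw [hmul j ℓ Mhat G, hmul j ℓ (G.map ⇑S) M, hhat j ℓ h1, hMsupp j ℓ h2, hSmap j ℓ,
      zero_mul, add_zero, mul_zero, zero_add] at e1
    exact e1
  -- descending induction for ℓ ≥ p
  have desc : ∀ n : ℕ, ∀ (j : Fin N) (m : ℤ), p ≤ m → (∀ a ∈ A, a < m + n) →
      G.map (P j m) = 0 := by
    intro n
    induction n with
    | zero =>
      intro j m _ ha
      exact hA j m fun hmem => absurd (ha m hmem) (by simp)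
    | succ n ih =>
      intro j m hm ha
      have h1 : G.map (P j (m + 1)) = 0 := by
        refine ih j (m + 1) (by omega) fun a haA => ?_
        have := ha a haA
        push_cast at this ⊢
        omega
      have h2 := hrel j (m + 1) (by simp [Set.mem_Icc]; omega) (by simp [Set.mem_Icc]; omega)
      rw [h1, mul_zero] at h2
      have h3 : (G.map (P j (m + 1 - 1))).map ⇑S = 0 := hcr _ h2.symm
      rw [show (m + 1 - 1 : ℤ) = m by ring] at h3
      exact hS0 _ h3
  -- ascending induction for ℓ < 0
  have asc : ∀ n : ℕ, ∀ (j : Fin N) (m : ℤ), m < 0 → (∀ a ∈ A, m - n < a) →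
      G.map (P j m) = 0 := by
    intro n
    induction n with
    | zero =>
      intro j m _ ha
      exact hA j m fun hmem => absurd (ha m hmem) (by simp)
    | succ n ih =>
      intro j m hm ha
      have h1 : G.map (P j (m - 1)) = 0 := by
        refine ih j (m - 1) (by omega) fun a haA => ?_
        have := ha a haA
        push_cast at this ⊢
        omega
      have h2 := hrel j m (by simp [Set.mem_Icc]; omega) (by simp [Set.mem_Icc]; omega)
      rw [h1, Matrix.map_zero _ (map_zero S), zero_mul] at h2
      exact hcl _ h2
  intro j ℓ hℓ
  simp only [Set.mem_Icc, not_and_or, not_le] at hℓ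
  rcases hℓ with hneg | hbig
  · -- ℓ < 0 : use asc
    rcases A.eq_empty_or_nonempty with hAe | hAne
    · exact asc 0 j ℓ hneg (by simp [hAe])
    · refine asc (ℓ - A.min' hAne + 1).natAbs j ℓ hneg fun a haA => ?_
      have hmin := A.min'_le a haA
      have : (0 : ℤ) ≤ ℓ - A.min' hAne + 1 ∨ ℓ - A.min' hAne + 1 < 0 := by omega
      have habs : ((ℓ - A.min' hAne + 1).natAbs : ℤ) ≥ ℓ - A.min' hAne + 1 := Int.le_natAbs
      omega
  · -- ℓ ≥ p : use desc
    rcases A.eq_empty_or_nonempty with hAe | hAne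
    · exact desc 0 j ℓ (by omega) (by simp [hAe])
    · refine desc (A.max' hAne - ℓ + 1).natAbs j ℓ (by omega) fun a haA => ?_
      have hmax := A.le_max' a haA
      have habs : ((A.max' hAne - ℓ + 1).natAbs : ℤ) ≥ A.max' hAne - ℓ + 1 := Int.le_natAbs
      omega
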